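/- Subadditivity of KPP solutions. Let u₁, u₂ and u₃ be solutions of the KPP equation with nonnegative bounded initial conditions. If u₃(0,x) ≤ u₁(0,x) + u₂(0,x) for all x ∈ ℝ, then u₃(t,x) ≤ u₁(t,x) + u₂(t,x) for all t > 0 and x ∈ ℝ. -/

import Mathlib

open MeasureTheory Set Filter Topology

open scoped NNReal ENNReal

/-- The branching mechanism ψ(λ) = −λ + βλ² + ∫₀^∞ (e^{−λy} − 1 + λy) n(dy). -/
noncomputable def psi (β : ℝ) (n : Measure ℝ) (l : ℝ) : ℝ :=
  -l + β * l ^ 2 + ∫ y in Ioi (0 : ℝ), (Real.exp (-l * y) - 1 + l * y) ∂n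

/-- A solution of the KPP equation ∂u/∂t − (1/2)∂²u/∂x² = −ψ(u): a nonnegative function
on [0,∞) × ℝ, continuous on [0,∞) × ℝ, C^{1,2} on (0,∞) × ℝ, bounded on [0,T] × ℝ
for every T > 0, satisfying the equation for all t > 0, x ∈ ℝ. -/
def IsKPPSolution (β : ℝ) (n : Measure ℝ) (u : ℝ → ℝ → ℝ) : Prop :=
  (∀ t : ℝ, 0 ≤ t → ∀ x : ℝ, 0 ≤ u t x) ∧
  ContinuousOn (fun p : ℝ × ℝ => u p.1 p.2) (Ici (0 : ℝ) ×ˢ (univ : Set ℝ)) ∧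
  (∀ x : ℝ, ∀ t : ℝ, 0 < t → DifferentiableAt ℝ (fun s => u s x) t) ∧
  (∀ t : ℝ, 0 < t → ContDiff ℝ 2 (u t)) ∧
  (∀ T : ℝ, 0 < T → ∃ C : ℝ, ∀ t ∈ Icc (0 : ℝ) T, ∀ x : ℝ, |u t x| ≤ C) ∧
  (∀ t : ℝ, 0 < t → ∀ x : ℝ,
    deriv (fun s => u s x) t - (1 / 2) * deriv (deriv (u t)) x = -psi β n (u t x))

lemma exp_pos_aux (x : ℝ) : 0 ≤ Real.exp (-x) - 1 + x := by
  nlinarith [Real.add_one_le_exp (-x)]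


lemma exp_quad (x : ℝ) (hx : 0 ≤ x) : Real.exp (-x) - 1 + x ≤ x ^ 2 := by
  have h : ∀ y ∈ Ici (0:ℝ), 0 ≤ deriv (fun z : ℝ => z ^ 2 + 1 - z - Real.exp (-z)) y := by
    intro y hy
    have hd : HasDerivAt (fun z : ℝ => z ^ 2 + 1 - z - Real.exp (-z))
        (2 * y - 1 + Real.exp (-y)) y := by
      have h1 : HasDerivAt (fun z : ℝ => Real.exp (-z)) (-Real.exp (-y)) y := by
        simpa [Function.comp_def] using (Real.hasDerivAt_exp (-y)).comp y (hasDerivAt_neg y)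
      have h2 : HasDerivAt (fun z : ℝ => z ^ 2 + 1 - z) (2 * y - 1) y := by
        have := ((hasDerivAt_pow 2 y).add_const 1).sub (hasDerivAt_id y)
        simpa [Pi.sub_def] using this
      simpa [sub_eq_add_neg, Pi.add_def, Pi.neg_def] using h2.sub h1
    rw [hd.deriv]
    nlinarith [Real.add_one_le_exp (-y), mem_Ici.mp hy]
  have hmono : MonotoneOn (fun z : ℝ => z ^ 2 + 1 - z - Real.exp (-z)) (Ici 0) := by
    apply monotoneOn_of_deriv_nonneg (convex_Ici 0)
    · exact (Continuous.continuousOn (by continuity))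
    · intro y hy
      apply DifferentiableAt.differentiableWithinAt
      fun_prop
    · intro y hy
      exact h y (interior_subset hy)
  have := hmono (mem_Ici.mpr le_rfl) (mem_Ici.mpr hx) hx
  simp at this
  nlinarith


lemma kernel_bound {l y : ℝ} (hl : 0 ≤ l) (hy : 0 < y) :
    Real.exp (-l * y) - 1 + l * y ≤ (l ^ 2 + l) * min (y ^ 2) y := by
  have hly : 0 ≤ l * y := mul_nonneg hl hy.le
  rcases le_total y 1 with h1 | h1
  · rw [min_eq_left (by nlinarith)]
    have := exp_quad (l * y) hly
    rw [neg_mul] at *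
    nlinarith
  · rw [min_eq_right (by nlinarith)]
    have : Real.exp (-(l * y)) ≤ 1 := Real.exp_le_one_iff.mpr (by linarith)
    rw [neg_mul]
    nlinarith


lemma kernel_integrable {n : Measure ℝ}
    (hn : ∫⁻ y in Ioi (0 : ℝ), ENNReal.ofReal (min (y ^ 2) y) ∂n < ⊤)
    {l : ℝ} (hl : 0 ≤ l) :
    IntegrableOn (fun y => Real.exp (-l * y) - 1 + l * y) (Ioi 0) n := by
  constructor
  · exact Continuous.aestronglyMeasurable (by continuity)
  · show (∫⁻ y in Ioi (0:ℝ), ↑‖Real.exp (-l * y) - 1 + l * y‖₊ ∂n) < ⊤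
    calc ∫⁻ y in Ioi (0:ℝ), (‖Real.exp (-l * y) - 1 + l * y‖₊ : ℝ≥0∞) ∂n
        ≤ ∫⁻ y in Ioi (0:ℝ), ENNReal.ofReal (l^2+l) * ENNReal.ofReal (min (y ^ 2) y) ∂n := by
          apply setLIntegral_mono' measurableSet_Ioi
          intro y hy
          rw [← ENNReal.ofReal_mul (by nlinarith)]
          have h0 : 0 ≤ Real.exp (-l * y) - 1 + l * y := by
            rw [neg_mul]; exact exp_pos_aux _
          rw [← enorm_eq_nnnorm, Real.enorm_eq_ofReal h0]
          exact ENNReal.ofReal_le_ofReal (kernel_bound hl hy)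
      _ < ⊤ := by
          rw [lintegral_const_mul' _ _ ENNReal.ofReal_ne_top]
          exact ENNReal.mul_lt_top ENNReal.ofReal_lt_top hn


lemma psi_superadd {β : ℝ} (hβ : 0 ≤ β) {n : Measure ℝ}
    (hn : ∫⁻ y in Ioi (0 : ℝ), ENNReal.ofReal (min (y ^ 2) y) ∂n < ⊤)
    {a b : ℝ} (ha : 0 ≤ a) (hb : 0 ≤ b) :
    psi β n a + psi β n b ≤ psi β n (a + b) := by
  have ia := kernel_integrable hn ha
  have ib := kernel_integrable hn hb
  have iab := kernel_integrable hn (by linarith : (0:ℝ) ≤ a + b)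
  have hint : (∫ y in Ioi (0:ℝ), (Real.exp (-a * y) - 1 + a * y) ∂n)
      + (∫ y in Ioi (0:ℝ), (Real.exp (-b * y) - 1 + b * y) ∂n)
      ≤ ∫ y in Ioi (0:ℝ), (Real.exp (-(a+b) * y) - 1 + (a+b) * y) ∂n := by
    rw [← integral_add ia ib]
    apply setIntegral_mono_on (ia.add ib) iab measurableSet_Ioi
    intro y hy
    have e1 : Real.exp (-a * y) ≤ 1 := Real.exp_le_one_iff.mpr
      (by nlinarith [mem_Ioi.mp hy])
    have e2 : Real.exp (-b * y) ≤ 1 := Real.exp_le_one_iff.mpr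
      (by nlinarith [mem_Ioi.mp hy])
    have e3 : Real.exp (-(a+b) * y) = Real.exp (-a * y) * Real.exp (-b * y) := by
      rw [← Real.exp_add]; ring_nf
    simp only [Pi.add_apply]
    nlinarith [mul_nonneg (sub_nonneg.2 e1) (sub_nonneg.2 e2)]
  simp only [psi]
  nlinarith [mul_nonneg (mul_nonneg hβ ha) hb]


lemma psi_onesided {β : ℝ} (hβ : 0 ≤ β) {n : Measure ℝ}
    (hn : ∫⁻ y in Ioi (0 : ℝ), ENNReal.ofReal (min (y ^ 2) y) ∂n < ⊤)
    {r s : ℝ} (hr : 0 ≤ r) (hrs : r ≤ s) :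
    psi β n r ≤ psi β n s + (s - r) := by
  have hs : (0:ℝ) ≤ s := le_trans hr hrs
  have ir := kernel_integrable hn hr
  have is := kernel_integrable hn hs
  have hint : (∫ y in Ioi (0:ℝ), (Real.exp (-r * y) - 1 + r * y) ∂n)
      ≤ ∫ y in Ioi (0:ℝ), (Real.exp (-s * y) - 1 + s * y) ∂n := by
    apply setIntegral_mono_on ir is measurableSet_Ioi
    intro y hy
    have hy' := mem_Ioi.mp hy
    have e1 : Real.exp (-r * y) ≤ 1 := Real.exp_le_one_iff.mpr (by nlinarith)
    have e2 : 1 - (s - r) * y ≤ Real.exp (-(s-r) * y) := by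
      nlinarith [Real.add_one_le_exp (-(s-r)*y)]
    have e3 : Real.exp (-s * y) = Real.exp (-r * y) * Real.exp (-(s-r) * y) := by
      rw [← Real.exp_add]; ring_nf
    have e4 : Real.exp (-(s-r) * y) ≤ 1 := Real.exp_le_one_iff.mpr (by nlinarith)
    nlinarith [mul_nonneg (sub_nonneg.2 e1) (sub_nonneg.2 e4)]
  simp only [psi]
  have h2 : r ^ 2 ≤ s ^ 2 := by nlinarith
  have : β * r ^ 2 ≤ β * s ^ 2 := mul_le_mul_of_nonneg_left h2 hβ
  linarith


lemma psi_key {β : ℝ} (hβ : 0 ≤ β) {n : Measure ℝ}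
    (hn : ∫⁻ y in Ioi (0 : ℝ), ENNReal.ofReal (min (y ^ 2) y) ∂n < ⊤)
    {a b c : ℝ} (ha : 0 ≤ a) (hb : 0 ≤ b) (hab : a + b ≤ c) :
    a + b - c ≤ -psi β n a - psi β n b + psi β n c := by
  have h1 := psi_superadd hβ hn ha hb
  have h2 := psi_onesided hβ hn (by linarith : (0:ℝ) ≤ a + b) hab
  linarith


lemma second_deriv_nonneg_of_isLocalMin {f : ℝ → ℝ} (hf : ContDiff ℝ 2 f)
    {a : ℝ} (h : IsLocalMin f a) : 0 ≤ deriv (deriv f) a := by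
  by_contra hneg
  push_neg at hneg
  have hf1 : Differentiable ℝ f := hf.differentiable (by norm_num)
  have hf2 : Differentiable ℝ (deriv f) := by
    have h2 : ContDiff ℝ ((1:WithTop ℕ∞) + 1) f := by
      rw [one_add_one_eq_two]; exact hf
    exact (contDiff_succ_iff_deriv.mp h2).2.2.differentiable one_ne_zero
  have hd0 : deriv f a = 0 := h.deriv_eq_zero
  have hder : HasDerivAt (deriv f) (deriv (deriv f) a) a := (hf2 a).hasDerivAt
  have hslopelim : Tendsto (slope (deriv f) a) (𝓝[≠] a) (𝓝 (deriv (deriv f) a)) :=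
    hasDerivAt_iff_tendsto_slope.mp hder
  have hslope' : Tendsto (slope (deriv f) a) (𝓝[>] a) (𝓝 (deriv (deriv f) a)) :=
    hslopelim.mono_left (nhdsWithin_mono a fun x hx => ne_of_gt hx)
  have hev : ∀ᶠ x in 𝓝[>] a, slope (deriv f) a x < 0 :=
    hslope'.eventually_lt_const hneg
  have hev2 : ∀ᶠ x in 𝓝[>] a, deriv f x < 0 := by
    filter_upwards [hev, self_mem_nhdsWithin] with x hx hx2
    have hx2' : a < x := hx2
    rw [slope_def_field, hd0, sub_zero] at hx
    have hxa : 0 < x - a := by linarith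
    by_contra hge
    push_neg at hge
    exact absurd hx (not_lt.mpr (div_nonneg hge hxa.le))
  obtain ⟨u, hu, hIoc⟩ := mem_nhdsGT_iff_exists_Ioc_subset.mp hev2
  have hu' : a < u := hu
  have hanti : StrictAntiOn f (Icc a u) := by
    apply strictAntiOn_of_deriv_neg (convex_Icc a u) (hf1.continuous.continuousOn)
    intro x hx
    rw [interior_Icc] at hx
    exact hIoc ⟨hx.1, hx.2.le⟩
  have hmin : ∀ᶠ x in 𝓝[>] a, f a ≤ f x :=
    (h.filter_mono (nhdsWithin_le_nhds))
  have hmem : ∀ᶠ x in 𝓝[>] a, x ∈ Ioc a u :=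
    Ioc_mem_nhdsGT_of_mem ⟨le_rfl, hu'⟩
  obtain ⟨x, hx1, hx2⟩ := (hmin.and hmem).exists
  have : f x < f a := hanti ⟨le_rfl, hu'.le⟩ ⟨hx2.1.le, hx2.2⟩ hx2.1
  linarith


lemma deriv_nonpos_at_right_min {f : ℝ → ℝ} {T a : ℝ}
    (hmin : IsMinOn f (Icc 0 T) a) (ha : a ∈ Ioc 0 T)
    (hd : DifferentiableAt ℝ f a) : deriv f a ≤ 0 := by
  have hloc : IsLocalMinOn f (Icc 0 T) a :=
    hmin.localize
  have hseg : segment ℝ a (0:ℝ) ⊆ Icc 0 T := by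
    rw [segment_symm, segment_eq_Icc ha.1.le]
    exact Icc_subset_Icc le_rfl ha.2
  have hy : (0:ℝ) - a ∈ posTangentConeAt (Icc 0 T) a :=
    sub_mem_posTangentConeAt_of_segment_subset hseg
  have hF : HasFDerivWithinAt f (ContinuousLinearMap.smulRight (1 : ℝ →L[ℝ] ℝ) (deriv f a))
      (Icc 0 T) a := (hd.hasDerivAt.hasFDerivAt).hasFDerivWithinAt
  have := hloc.hasFDerivWithinAt_nonneg hF hy
  simp only [ContinuousLinearMap.smulRight_apply, ContinuousLinearMap.one_apply,
    smul_eq_mul] at this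
  nlinarith [ha.1]


lemma contdiff_deriv_diff {f : ℝ → ℝ} (hf : ContDiff ℝ 2 f) :
    Differentiable ℝ (deriv f) := by
  have h2 : ContDiff ℝ ((1:WithTop ℕ∞) + 1) f := by
    rw [one_add_one_eq_two]; exact hf
  exact (contDiff_succ_iff_deriv.mp h2).2.2.differentiable one_ne_zero

set_option maxHeartbeats 1000000 in
theorem kpp_subadditive
    (β : ℝ) (hβ : 0 ≤ β) (n : Measure ℝ) [SigmaFinite n]
    (hn : ∫⁻ y in Ioi (0 : ℝ), ENNReal.ofReal (min (y ^ 2) y) ∂n < ⊤)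
    (u₁ u₂ u₃ : ℝ → ℝ → ℝ)
    (hu₁ : IsKPPSolution β n u₁) (hu₂ : IsKPPSolution β n u₂) (hu₃ : IsKPPSolution β n u₃)
    (hbdd₁ : ∃ C : ℝ, ∀ x : ℝ, u₁ 0 x ≤ C) (hbdd₂ : ∃ C : ℝ, ∀ x : ℝ, u₂ 0 x ≤ C)
    (hbdd₃ : ∃ C : ℝ, ∀ x : ℝ, u₃ 0 x ≤ C)
    (hinit : ∀ x : ℝ, u₃ 0 x ≤ u₁ 0 x + u₂ 0 x) :
    ∀ t : ℝ, 0 < t → ∀ x : ℝ, u₃ t x ≤ u₁ t x + u₂ t x := by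
  obtain ⟨hpos₁, hcont₁, hdt₁, hdx₁, hbd₁, hpde₁⟩ := hu₁
  obtain ⟨hpos₂, hcont₂, hdt₂, hdx₂, hbd₂, hpde₂⟩ := hu₂
  obtain ⟨hpos₃, hcont₃, hdt₃, hdx₃, hbd₃, hpde₃⟩ := hu₃
  intro t₀ ht₀ x₀
  set T := t₀ with hT
  obtain ⟨C₁, hC₁⟩ := hbd₁ T ht₀
  obtain ⟨C₂, hC₂⟩ := hbd₂ T ht₀
  obtain ⟨C₃, hC₃⟩ := hbd₃ T ht₀
  set M := C₁ + C₂ + C₃ with hM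
  have hzeroIcc : (0:ℝ) ∈ Icc (0:ℝ) T := ⟨le_rfl, ht₀.le⟩
  have hMnn : 0 ≤ M := by
    have h1 := hC₁ 0 hzeroIcc 0
    have h2 := hC₂ 0 hzeroIcc 0
    have h3 := hC₃ 0 hzeroIcc 0
    have := abs_nonneg (u₁ 0 0)
    have := abs_nonneg (u₂ 0 0)
    have := abs_nonneg (u₃ 0 0)
    simp only [hM]; linarith
  -- lower bound on w
  have hwlow : ∀ t ∈ Icc (0:ℝ) T, ∀ x : ℝ, -M ≤ u₁ t x + u₂ t x - u₃ t x := by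
    intro t ht x
    have h1 := abs_le.mp (hC₁ t ht x)
    have h2 := abs_le.mp (hC₂ t ht x)
    have h3 := abs_le.mp (hC₃ t ht x)
    simp only [hM]; linarith [h1.1, h2.1, h3.2]
  -- the key positivity claim
  have key : ∀ ε : ℝ, 0 < ε → ∀ t ∈ Icc (0:ℝ) T, ∀ x : ℝ,
      0 < Real.exp (-3*t) * (u₁ t x + u₂ t x - u₃ t x) + ε * (1 + x^2) := by
    intro ε hε
    by_contra hbad
    push_neg at hbad
    obtain ⟨tb, htb, xb, hgb⟩ := hbad
    -- G on the product space
    set G : ℝ × ℝ → ℝ := fun p =>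
      Real.exp (-3*p.1) * (u₁ p.1 p.2 + u₂ p.1 p.2 - u₃ p.1 p.2) + ε * (1 + p.2^2) with hG
    have hGcont : ContinuousOn G (Ici (0:ℝ) ×ˢ (univ : Set ℝ)) := by
      apply ContinuousOn.add
      · apply ContinuousOn.mul
        · exact (Real.continuous_exp.comp (continuous_const.mul continuous_fst)).continuousOn
        · exact (hcont₁.add hcont₂).sub hcont₃
      · exact (continuous_const.mul ((continuous_const.add
          ((continuous_snd.pow 2))))).continuousOn
    -- exp factor bounds on [0,T]
    have hexp_le_one : ∀ t ∈ Icc (0:ℝ) T, Real.exp (-3*t) ≤ 1 := by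
      intro t ht
      exact Real.exp_le_one_iff.mpr (by nlinarith [ht.1])
    have hGlow : ∀ t ∈ Icc (0:ℝ) T, ∀ x : ℝ, -M + ε * (1 + x^2) ≤ G (t, x) := by
      intro t ht x
      have h1 := hwlow t ht x
      have h2 := hexp_le_one t ht
      have h3 := Real.exp_pos (-3*t)
      have : -M ≤ Real.exp (-3*t) * (u₁ t x + u₂ t x - u₃ t x) := by nlinarith
      simp only [hG]; nlinarith
    -- choice of R
    set R : ℝ := Real.sqrt (M / ε) + 1 with hR
    have hRpos : 0 < R := by positivity
    have hRbig : ∀ x : ℝ, R ≤ |x| → M < ε * x^2 := by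
      intro x hx
      have h1 : R^2 ≤ x^2 := by
        have := abs_nonneg x
        nlinarith [sq_abs x]
      have h2 : M / ε ≤ Real.sqrt (M/ε) ^ 2 := by
        rw [Real.sq_sqrt (by positivity)]
      have h3 : 0 ≤ Real.sqrt (M/ε) := Real.sqrt_nonneg _
      have h4 : M / ε < R^2 := by simp only [hR]; nlinarith
      have := (div_lt_iff₀ hε).mp h4
      nlinarith
    -- the bad point is in K
    have hxbR : |xb| ≤ R := by
      by_contra hxx
      push_neg at hxx
      have := hRbig xb hxx.le
      have := hGlow tb htb xb
      have : (0:ℝ) < G (tb, xb) := by nlinarith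
      simp only [hG] at this
      linarith
    set K : Set (ℝ × ℝ) := Icc (0:ℝ) T ×ˢ Icc (-R) R with hK
    have hKsub : K ⊆ Ici (0:ℝ) ×ˢ (univ : Set ℝ) := fun p hp => ⟨hp.1.1, trivial⟩
    have hKcpt : IsCompact K := isCompact_Icc.prod isCompact_Icc
    have hKne : K.Nonempty := ⟨(0, 0), hzeroIcc, by constructor <;> simp <;> linarith⟩
    obtain ⟨p, hpK, hpmin⟩ := hKcpt.exists_isMinOn hKne (hGcont.mono hKsub)
    have hbadK : (tb, xb) ∈ K := ⟨htb, abs_le.mp hxbR⟩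
    have hm : G p ≤ 0 := le_trans (hpmin hbadK) hgb
    obtain ⟨⟨hp1a, hp1b⟩, hp2a, hp2b⟩ := hpK
    -- t* > 0
    have ht1pos : 0 < p.1 := by
      rcases lt_or_eq_of_le hp1a with h | h
      · exact h
      · exfalso
        have h0 : G p = (u₁ 0 p.2 + u₂ 0 p.2 - u₃ 0 p.2) + ε * (1 + p.2^2) := by
          simp only [hG, ← h]; simp
        have h1 := hinit p.2
        have : (0:ℝ) < G p := by rw [h0]; nlinarith
        linarith
    -- |x*| < R
    have hx2lt : p.2 ∈ Ioo (-R) R := by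
      constructor
      · rcases lt_or_eq_of_le hp2a with h | h
        · exact h
        · exfalso
          have := hRbig p.2 (by rw [← h]; rw [abs_of_nonpos (by linarith)]; linarith)
          have := hGlow p.1 ⟨hp1a, hp1b⟩ p.2
          have : (0:ℝ) < G (p.1, p.2) := by nlinarith
          simp at this; linarith [hm, this]
      · rcases lt_or_eq_of_le hp2b with h | h
        · exact h
        · exfalso
          have := hRbig p.2 (by rw [h, abs_of_nonneg (by linarith)])
          have := hGlow p.1 ⟨hp1a, hp1b⟩ p.2
          have : (0:ℝ) < G (p.1, p.2) := by nlinarith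
          simp at this; linarith [hm, this]
    -- notation for the minimum point
    set t' := p.1 with ht'
    set x' := p.2 with hx'
    have hEpos : 0 < Real.exp (-3*t') := Real.exp_pos _
    -- space regularity
    have hWc : ContDiff ℝ 2 (fun x => u₁ t' x + u₂ t' x - u₃ t' x) :=
      ((hdx₁ t' ht1pos).add (hdx₂ t' ht1pos)).sub (hdx₃ t' ht1pos)
    have hhc : ContDiff ℝ 2 (fun x => Real.exp (-3*t') * (u₁ t' x + u₂ t' x - u₃ t' x) + ε * (1 + x^2)) :=
      (contDiff_const.mul hWc).add
        (contDiff_const.mul (contDiff_const.add (contDiff_id.pow 2)))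
    -- local min in space
    have hlocmin : IsLocalMin (fun x => Real.exp (-3*t') * (u₁ t' x + u₂ t' x - u₃ t' x) + ε * (1 + x^2)) x' := by
      have hnhds : Icc (-R) R ∈ 𝓝 x' := Icc_mem_nhds hx2lt.1 hx2lt.2
      filter_upwards [hnhds] with x hx
      have h1 := hpmin (show ((t', x) : ℝ × ℝ) ∈ K from ⟨⟨hp1a, hp1b⟩, hx⟩)
      simpa only [hG, mem_setOf_eq] using h1
    have hS0 : 0 ≤ deriv (deriv (fun x => Real.exp (-3*t') * (u₁ t' x + u₂ t' x - u₃ t' x) + ε * (1 + x^2))) x' :=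
      second_deriv_nonneg_of_isLocalMin hhc hlocmin
    -- differentiability facts in space
    have hu1d : Differentiable ℝ (u₁ t') := (hdx₁ t' ht1pos).differentiable (by norm_num)
    have hu2d : Differentiable ℝ (u₂ t') := (hdx₂ t' ht1pos).differentiable (by norm_num)
    have hu3d : Differentiable ℝ (u₃ t') := (hdx₃ t' ht1pos).differentiable (by norm_num)
    have hu1d2 : Differentiable ℝ (deriv (u₁ t')) := contdiff_deriv_diff (hdx₁ t' ht1pos)
    have hu2d2 : Differentiable ℝ (deriv (u₂ t')) := contdiff_deriv_diff (hdx₂ t' ht1pos)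
    have hu3d2 : Differentiable ℝ (deriv (u₃ t')) := contdiff_deriv_diff (hdx₃ t' ht1pos)
    have hWd : Differentiable ℝ (fun x => u₁ t' x + u₂ t' x - u₃ t' x) :=
      hWc.differentiable (by norm_num)
    have hW2 : Differentiable ℝ (deriv (fun x => u₁ t' x + u₂ t' x - u₃ t' x)) :=
      contdiff_deriv_diff hWc
    -- first space derivative of h
    have hd1 : deriv (fun x => Real.exp (-3*t') * (u₁ t' x + u₂ t' x - u₃ t' x) + ε * (1 + x^2))
        = fun x => Real.exp (-3*t') * deriv (fun x => u₁ t' x + u₂ t' x - u₃ t' x) x + ε * (2*x) := by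
      funext x
      have hq : HasDerivAt (fun x : ℝ => ε * (1 + x^2)) (ε * (2*x)) x := by
        have := ((hasDerivAt_pow 2 x).const_add (1:ℝ)).const_mul ε
        norm_num at this
        simpa [mul_comm] using this
      exact (((hWd x).hasDerivAt.const_mul (Real.exp (-3*t'))).add hq).deriv
    have hd2 : deriv (deriv (fun x => Real.exp (-3*t') * (u₁ t' x + u₂ t' x - u₃ t' x) + ε * (1 + x^2))) x'
        = Real.exp (-3*t') * deriv (deriv (fun x => u₁ t' x + u₂ t' x - u₃ t' x)) x' + ε * 2 := by
      rw [hd1]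
      have hq : HasDerivAt (fun x : ℝ => ε * (2*x)) (ε*2) x' := by
        simpa [mul_comm, mul_assoc] using (((hasDerivAt_id x').const_mul (2:ℝ)).const_mul ε)
      exact (((hW2 x').hasDerivAt.const_mul (Real.exp (-3*t'))).add hq).deriv
    -- second derivative of W splits
    have hWd1 : deriv (fun x => u₁ t' x + u₂ t' x - u₃ t' x)
        = fun x => deriv (u₁ t') x + deriv (u₂ t') x - deriv (u₃ t') x := by
      funext x
      exact (((hu1d x).hasDerivAt.add (hu2d x).hasDerivAt).sub (hu3d x).hasDerivAt).deriv
    have hWd2 : deriv (deriv (fun x => u₁ t' x + u₂ t' x - u₃ t' x)) x'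
        = deriv (deriv (u₁ t')) x' + deriv (deriv (u₂ t')) x' - deriv (deriv (u₃ t')) x' := by
      rw [hWd1]
      exact (((hu1d2 x').hasDerivAt.add (hu2d2 x').hasDerivAt).sub (hu3d2 x').hasDerivAt).deriv
    -- time derivative
    have hEd : HasDerivAt (fun s : ℝ => Real.exp (-3*s)) (Real.exp (-3*t') * (-3)) t' := by
      have h1 : HasDerivAt (fun s : ℝ => -3*s) (-3) t' := by
        simpa using (hasDerivAt_id t').const_mul (-3:ℝ)
      exact (Real.hasDerivAt_exp (-3*t')).comp t' h1
    have hWt : HasDerivAt (fun s => u₁ s x' + u₂ s x' - u₃ s x')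
        (deriv (fun s => u₁ s x') t' + deriv (fun s => u₂ s x') t'
          - deriv (fun s => u₃ s x') t') t' :=
      (((hdt₁ x' t' ht1pos).hasDerivAt.add (hdt₂ x' t' ht1pos).hasDerivAt).sub
        (hdt₃ x' t' ht1pos).hasDerivAt)
    have hkD : HasDerivAt
        (fun s => Real.exp (-3*s) * (u₁ s x' + u₂ s x' - u₃ s x') + ε * (1 + x'^2))
        (Real.exp (-3*t') * (-3) * (u₁ t' x' + u₂ t' x' - u₃ t' x')
          + Real.exp (-3*t') * (deriv (fun s => u₁ s x') t' + deriv (fun s => u₂ s x') t'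
            - deriv (fun s => u₃ s x') t')) t' := by
      exact (hEd.mul hWt).add_const (ε * (1 + x'^2))
    have hkmin : IsMinOn
        (fun s => Real.exp (-3*s) * (u₁ s x' + u₂ s x' - u₃ s x') + ε * (1 + x'^2))
        (Icc 0 T) t' := by
      intro s hs
      have h1 := hpmin (show ((s, x') : ℝ × ℝ) ∈ K from ⟨hs, ⟨hx2lt.1.le, hx2lt.2.le⟩⟩)
      simpa only [hG, mem_setOf_eq] using h1
    have hk0 : Real.exp (-3*t') * (-3) * (u₁ t' x' + u₂ t' x' - u₃ t' x')
        + Real.exp (-3*t') * (deriv (fun s => u₁ s x') t' + deriv (fun s => u₂ s x') t'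
          - deriv (fun s => u₃ s x') t') ≤ 0 := by
      have := deriv_nonpos_at_right_min hkmin ⟨ht1pos, hp1b⟩ hkD.differentiableAt
      rwa [hkD.deriv] at this
    -- PDE identities
    have he₁ := hpde₁ t' ht1pos x'
    have he₂ := hpde₂ t' ht1pos x'
    have he₃ := hpde₃ t' ht1pos x'
    -- psi comparison
    have ha := hpos₁ t' ht1pos.le x'
    have hb := hpos₂ t' ht1pos.le x'
    have hmG : Real.exp (-3*t') * (u₁ t' x' + u₂ t' x' - u₃ t' x') + ε * (1 + x'^2) ≤ 0 := by
      simpa only [hG] using hm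
    have hepsx : 0 < ε * (1 + x'^2) := by positivity
    have habc : u₁ t' x' + u₂ t' x' ≤ u₃ t' x' := by nlinarith
    have hkey := psi_key hβ hn ha hb habc
    -- assemble the contradiction
    have hS0' : 0 ≤ Real.exp (-3*t') * (deriv (deriv (u₁ t')) x' + deriv (deriv (u₂ t')) x'
        - deriv (deriv (u₃ t')) x') + ε * 2 := by
      rw [hd2, hWd2] at hS0; linarith
    have hDS : u₁ t' x' + u₂ t' x' - u₃ t' x'
        ≤ (deriv (fun s => u₁ s x') t' + deriv (fun s => u₂ s x') t'
            - deriv (fun s => u₃ s x') t')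
          - (1/2) * (deriv (deriv (u₁ t')) x' + deriv (deriv (u₂ t')) x'
            - deriv (deriv (u₃ t')) x') := by linarith
    have hDSE := mul_le_mul_of_nonneg_left hDS hEpos.le
    nlinarith [hmG, hk0, hS0', hDSE, hepsx]

  -- conclude from the key claim
  have hfin : ∀ ε : ℝ, 0 < ε →
      -(Real.exp (-3*t₀) * (u₁ t₀ x₀ + u₂ t₀ x₀ - u₃ t₀ x₀)) ≤ ε := by
    intro ε hε
    have hx : (0:ℝ) < 1 + x₀^2 := by positivity
    have := key (ε / (1 + x₀^2)) (by positivity) t₀ ⟨ht₀.le, le_rfl⟩ x₀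
    have h2 : ε / (1 + x₀^2) * (1 + x₀^2) = ε := div_mul_cancel₀ ε (ne_of_gt hx)
    nlinarith
  have h3 : 0 ≤ Real.exp (-3*t₀) * (u₁ t₀ x₀ + u₂ t₀ x₀ - u₃ t₀ x₀) := by
    by_contra hc
    push_neg at hc
    have := hfin (-(Real.exp (-3*t₀) * (u₁ t₀ x₀ + u₂ t₀ x₀ - u₃ t₀ x₀)) / 2) (by linarith)
    linarith
  nlinarith [Real.exp_pos (-3*t₀)]
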